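/- On a U_q(sl₂)-module of highest weight λ, the truncated extremal projector p_m(s) = Σ_{k=0}^m f^k e^k (−1)^k q^{k(s−1)} / ([k]_q! ∏_{i=1}^k [h+s+i]_q) acts on a weight vector v of weight η = λ − lα (i.e. e-string depth l ≤ m) as the scalar c ∏_{k=1}^{l} [s−k]_q/[s+η(h)+k]_q with c = q^{−lη(h) − l(l+1)} ≠ 0, whenever all the denominators [η(h)+s+i]_q, 1 ≤ i ≤ l, are nonzero. -/

import Mathlib

/-- `[z]_q = (q^z - q^{-z})/(q - q⁻¹)` with `q^z := exp(z log q)`. -/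
noncomputable def qnum (q z : ℂ) : ℂ :=
  (Complex.exp (z * Complex.log q) - Complex.exp (-z * Complex.log q)) / (q - q⁻¹)

/-- `q^z := exp(z log q)`. -/
noncomputable def qpow (q z : ℂ) : ℂ := Complex.exp (z * Complex.log q)

namespace TP
open Finset

variable (q : ℂ)

lemma qpow_add (a b : ℂ) : qpow q (a + b) = qpow q a * qpow q b := by
  simp [qpow, add_mul, Complex.exp_add]

lemma qpow_neg (a : ℂ) : qpow q (-a) = (qpow q a)⁻¹ := by
  simp [qpow, neg_mul, Complex.exp_neg]

lemma qpow_zero : qpow q 0 = 1 := by simp [qpow]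

lemma qpow_ne_zero (a : ℂ) : qpow q a ≠ 0 := Complex.exp_ne_zero _

lemma qpow_natmul (n : ℕ) (a : ℂ) : qpow q ((n : ℂ) * a) = qpow q a ^ n := by
  simp [qpow, mul_assoc, Complex.exp_nat_mul]

lemma qnum_eq (z : ℂ) : qnum q z = (qpow q z - (qpow q z)⁻¹) / (q - q⁻¹) := by
  rw [qnum, ← qpow_neg]; rfl

lemma qnum_zero : qnum q 0 = 0 := by simp [qnum]

lemma qnum_neg (z : ℂ) : qnum q (-z) = - qnum q z := by
  rw [qnum_eq, qnum_eq, qpow_neg, inv_inv, ← neg_div]; ring_nf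

lemma qnum_split (a b : ℂ) : qnum q (a + b) = qpow q (-b) * qnum q a + qpow q a * qnum q b := by
  have h1 := qpow_ne_zero q a
  have h2 := qpow_ne_zero q b
  have key : qpow q (a + b) - (qpow q (a + b))⁻¹ =
      (qpow q b)⁻¹ * (qpow q a - (qpow q a)⁻¹) + qpow q a * (qpow q b - (qpow q b)⁻¹) := by
    rw [qpow_add]; field_simp; ring
  rw [qnum_eq, qnum_eq, qnum_eq, qpow_neg, key]; ring

noncomputable def qfact (k : ℕ) : ℂ := ∏ i ∈ range k, qnum q ((i : ℂ) + 1)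
noncomputable def qtop (l k : ℕ) : ℂ := ∏ j ∈ range k, qnum q ((l : ℂ) - j)
noncomputable def qbin (l k : ℕ) : ℂ := qtop q l k / qfact q k
noncomputable def PP (lam : ℂ) (l k : ℕ) : ℂ := ∏ j ∈ range k, qnum q (lam - l + j + 1)
noncomputable def NN (lam s : ℂ) (l k : ℕ) : ℂ := ∏ i ∈ Ico k l, qnum q (s + lam - 2 * l + i + 1)
noncomputable def tA (lam s : ℂ) (l k : ℕ) : ℂ :=
  (-1) ^ k * qpow q ((k : ℂ) * (s - 1)) * qbin q l k * PP q lam l k * NN q lam s l k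

noncomputable def TT (lam s : ℂ) (l : ℕ) : ℂ := ∑ k ∈ range (l + 1), tA q lam s l k

lemma prod_Ico_shift (f : ℕ → ℂ) (a b : ℕ) :
    ∏ i ∈ Ico (a + 1) (b + 1), f i = ∏ i ∈ Ico a b, f (i + 1) := by
  rw [← Finset.map_add_right_Ico _ _ 1, Finset.prod_map]
  rfl

lemma qtop_eq_zero (l k : ℕ) (hlk : l < k) : qtop q l k = 0 := by
  refine Finset.prod_eq_zero (Finset.mem_range.mpr hlk) ?_
  rw [sub_self, qnum_zero]

lemma NN_top (lam s : ℂ) (l k : ℕ) (hkl : k ≤ l) :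
    NN q lam s (l + 1) k = qnum q (s + lam - l - 1) * NN q (lam - 1) (s - 1) l k := by
  unfold NN
  rw [Finset.prod_Ico_succ_top hkl, mul_comm]
  congr 1
  · congr 1; push_cast; ring
  · exact Finset.prod_congr rfl fun i _ => by congr 1; push_cast; ring


lemma NN_bot (lam s : ℂ) (l k : ℕ) (hkl : k ≤ l) :
    NN q lam s (l + 1) k = qnum q (s + lam - 2 * l + k - 1) * NN q lam s (l + 1) (k + 1) := by
  unfold NN
  rw [Finset.prod_eq_prod_Ico_succ_bot (by omega : k < l + 1)]
  congr 2
  push_cast; ring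


lemma NN_shift (lam s : ℂ) (l k : ℕ) :
    NN q lam s (l + 1) (k + 1) = NN q (lam - 1) s l k := by
  unfold NN
  rw [prod_Ico_shift]
  exact Finset.prod_congr rfl fun i _ => by congr 1; push_cast; ring


lemma PP_shift (lam : ℂ) (l k : ℕ) : PP q lam (l + 1) k = PP q (lam - 1) l k :=
  Finset.prod_congr rfl fun j _ => by congr 1; push_cast; ring


lemma PP_succ (lam : ℂ) (l k : ℕ) :
    PP q (lam - 1) l (k + 1) = PP q (lam - 1) l k * qnum q (lam - l + k) := by
  rw [PP, Finset.prod_range_succ]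
  congr 2
  ring


lemma qbin_zero_top (l : ℕ) : qbin q l (l + 1) = 0 := by
  rw [qbin, qtop_eq_zero q l (l + 1) (by omega), zero_div]


lemma bin_NN (lam s : ℂ) (l k : ℕ) (hkl : k ≤ l) :
    qbin q l (k + 1) * NN q lam s (l + 1) (k + 1) =
      qbin q l (k + 1) * (qnum q (s + lam - l - 1) * NN q (lam - 1) (s - 1) l (k + 1)) := by
  rcases Nat.lt_or_ge k l with h | h
  · rw [NN_top q lam s l (k + 1) (by omega)]
  · have hkl2 : k = l := by omega
    subst hkl2
    rw [qbin_zero_top, zero_mul, zero_mul]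

variable (hq0 : q ≠ 0) (hq : ∀ n : ℕ, 0 < n → q ^ n ≠ 1)
include hq0

lemma qpow_one : qpow q 1 = q := by
  simp [qpow, Complex.exp_log hq0]

lemma qpow_nat (n : ℕ) : qpow q (n : ℂ) = q ^ n := by
  rw [show ((n : ℂ)) = (n : ℂ) * 1 by ring, qpow_natmul, qpow_one q hq0]

include hq

lemma sub_inv_ne_zero : q - q⁻¹ ≠ 0 := by
  intro h
  apply hq 2 (by norm_num)
  have : q = q⁻¹ := by linear_combination h
  calc q ^ 2 = q * q := sq q
  _ = q * q⁻¹ := by rw [← this]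
  _ = 1 := mul_inv_cancel₀ hq0

lemma qnum_nat_ne_zero (n : ℕ) (hn : 0 < n) : qnum q (n : ℂ) ≠ 0 := by
  rw [qnum_eq, qpow_nat q hq0]
  apply div_ne_zero _ (sub_inv_ne_zero q hq0 hq)
  rw [sub_ne_zero]
  intro h
  apply hq (2 * n) (by omega)
  have hpn : q ^ n ≠ 0 := pow_ne_zero _ hq0
  calc q ^ (2 * n) = q ^ n * q ^ n := by rw [two_mul, pow_add]
  _ = q ^ n * (q ^ n)⁻¹ := by rw [← h]
  _ = 1 := mul_inv_cancel₀ hpn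

lemma qnum_succ_ne_zero (n : ℕ) : qnum q ((n : ℂ) + 1) ≠ 0 := by
  have := qnum_nat_ne_zero q hq0 hq (n + 1) (by omega)
  push_cast at this
  exact this

lemma qfact_ne_zero (k : ℕ) : qfact q k ≠ 0 :=
  Finset.prod_ne_zero_iff.mpr fun i _ => qnum_succ_ne_zero q hq0 hq i

lemma qtop_ne_zero (l k : ℕ) (hkl : k ≤ l) : qtop q l k ≠ 0 := by
  refine Finset.prod_ne_zero_iff.mpr fun j hj => ?_
  rw [Finset.mem_range] at hj
  have hjl : j ≤ l := by omega
  rw [show (l : ℂ) - j = ((l - j : ℕ) : ℂ) by push_cast [Nat.cast_sub hjl]; ring]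
  exact qnum_nat_ne_zero q hq0 hq _ (by omega)

lemma pascal (l k : ℕ) : qbin q (l + 1) (k + 1) =
    qpow q (-((k : ℂ) + 1)) * qbin q l (k + 1) + qpow q ((l : ℂ) - k) * qbin q l k := by
  rcases le_or_gt k l with hkl | hkl
  · have htop1 : qtop q (l + 1) (k + 1) = qnum q ((l : ℂ) + 1) * qtop q l k := by
      rw [qtop, Finset.prod_range_succ',
        show (((l + 1 : ℕ)) : ℂ) - ((0 : ℕ) : ℂ) = (l : ℂ) + 1 by push_cast; ring, mul_comm]
      congr 1
      unfold qtop
      exact Finset.prod_congr rfl fun i _ => by congr 1; push_cast; ring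
    have htop2 : qtop q l (k + 1) = qtop q l k * qnum q ((l : ℂ) - k) :=
      Finset.prod_range_succ _ _
    have hfact : qfact q (k + 1) = qfact q k * qnum q ((k : ℂ) + 1) :=
      Finset.prod_range_succ _ _
    have key := qnum_split q ((l : ℂ) - k) ((k : ℂ) + 1)
    rw [show (l : ℂ) - k + ((k : ℂ) + 1) = (l : ℂ) + 1 by ring] at key
    have h1 : qfact q k ≠ 0 := qfact_ne_zero q hq0 hq k
    have h2 : qnum q ((k : ℂ) + 1) ≠ 0 := qnum_succ_ne_zero q hq0 hq k
    unfold qbin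
    rw [htop1, htop2, hfact, key]
    field_simp
  · have z1 : qtop q (l + 1) (k + 1) = 0 := qtop_eq_zero q _ _ (by omega)
    have z2 : qtop q l (k + 1) = 0 := qtop_eq_zero q _ _ (by omega)
    have z3 : qtop q l k = 0 := qtop_eq_zero q _ _ (by omega)
    simp [qbin, z1, z2, z3]


lemma TT_rec (lam s : ℂ) (l : ℕ) :
    TT q lam s (l + 1) =
      (1 - qpow q (2 * s - 2)) * qnum q (s + lam - l - 1) * TT q (lam - 1) (s - 1) l
      - qpow q (2 * s + lam - l - 2) * qnum q ((l : ℂ) + 1 - s) * TT q (lam - 1) s l := by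
  set c1 := qnum q (s + lam - l - 1) with hc1
  set cb := qnum q ((l : ℂ) + 1 - s) with hcb
  have hstep : ∀ k : ℕ, k ≤ l →
      tA q lam s (l + 1) (k + 1) =
        c1 * tA q (lam - 1) (s - 1) l (k + 1)
        - qpow q (2 * s - 2) * c1 * tA q (lam - 1) (s - 1) l k
        - qpow q (2 * s + lam - l - 2) * cb * tA q (lam - 1) s l k := by
    intro k hk
    have h1 := pascal q hq0 hq l k
    have h2 : PP q lam (l + 1) (k + 1) = PP q (lam - 1) l (k + 1) := PP_shift q lam (l + 1 - 1) (k + 1)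
    have h3 : NN q lam s (l + 1) (k + 1) = NN q (lam - 1) s l k := NN_shift q lam s l k
    have h4 : qbin q l (k + 1) * NN q (lam - 1) s l k =
        qbin q l (k + 1) * (c1 * NN q (lam - 1) (s - 1) l (k + 1)) := by
      rw [← h3]; exact bin_NN q lam s l k hk
    have h5 : PP q (lam - 1) l (k + 1) = PP q (lam - 1) l k * qnum q (lam - l + k) :=
      PP_succ q lam l k
    have h6 : qnum q (lam - (l : ℂ) + k) =
        qpow q (s - (l : ℂ) - 1) * qnum q (s + lam - 2 * l + k - 1)
          + qpow q (s + lam - 2 * l + k - 1) * cb := by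
      have h := qnum_split q (s + lam - 2 * (l : ℂ) + k - 1) ((l : ℂ) + 1 - s)
      rw [show s + lam - 2 * (l : ℂ) + k - 1 + ((l : ℂ) + 1 - s) = lam - l + k by ring,
        show -((l : ℂ) + 1 - s) = s - (l : ℂ) - 1 by ring] at h
      rw [h, hcb]
    have h7 : qnum q (s + lam - 2 * (l : ℂ) + k - 1) * NN q (lam - 1) s l k =
        c1 * NN q (lam - 1) (s - 1) l k := by
      rw [← h3, ← NN_bot q lam s l k hk, NN_top q lam s l k hk]
    have hQ1 : qpow q ((↑(k + 1) : ℂ) * (s - 1)) * qpow q (-((k : ℂ) + 1)) =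
        qpow q ((↑(k + 1) : ℂ) * (s - 1 - 1)) := by
      rw [← qpow_add]; congr 1; push_cast; ring
    have hQ2 : qpow q ((↑(k + 1) : ℂ) * (s - 1)) * qpow q ((l : ℂ) - k) * qpow q (s - (l : ℂ) - 1) =
        qpow q (2 * s - 2) * qpow q ((k : ℂ) * (s - 1 - 1)) := by
      rw [← qpow_add, ← qpow_add, ← qpow_add]; congr 1; push_cast; ring
    have hQ3 : qpow q ((↑(k + 1) : ℂ) * (s - 1)) * qpow q ((l : ℂ) - k) *
          qpow q (s + lam - 2 * l + k - 1) =
        qpow q (2 * s + lam - l - 2) * qpow q ((k : ℂ) * (s - 1)) := by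
      rw [← qpow_add, ← qpow_add, ← qpow_add]; congr 1; push_cast; ring
    unfold tA
    calc (-1) ^ (k + 1) * qpow q ((↑(k + 1) : ℂ) * (s - 1)) * qbin q (l + 1) (k + 1) *
          PP q lam (l + 1) (k + 1) * NN q lam s (l + 1) (k + 1)
        = (qpow q ((↑(k + 1) : ℂ) * (s - 1)) * qpow q (-((k : ℂ) + 1))) *
            ((-1) ^ (k + 1) * PP q (lam - 1) l (k + 1) * (qbin q l (k + 1) * NN q (lam - 1) s l k))
          + (qpow q ((↑(k + 1) : ℂ) * (s - 1)) * qpow q ((l : ℂ) - k)) *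
            ((-1) ^ (k + 1) * qbin q l k * PP q (lam - 1) l (k + 1) * NN q (lam - 1) s l k) := by
          rw [h1, h2, h3]; ring
      _ = (qpow q ((↑(k + 1) : ℂ) * (s - 1)) * qpow q (-((k : ℂ) + 1))) *
            ((-1) ^ (k + 1) * PP q (lam - 1) l (k + 1) *
              (qbin q l (k + 1) * (c1 * NN q (lam - 1) (s - 1) l (k + 1))))
          + (qpow q ((↑(k + 1) : ℂ) * (s - 1)) * qpow q ((l : ℂ) - k)) *
            ((-1) ^ (k + 1) * qbin q l k * (PP q (lam - 1) l k * qnum q (lam - l + k)) *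
              NN q (lam - 1) s l k) := by
          linear_combination
            (qpow q ((↑(k + 1) : ℂ) * (s - 1)) * qpow q (-((k : ℂ) + 1))) *
              ((-1) ^ (k + 1) * PP q (lam - 1) l (k + 1)) * h4
            + (qpow q ((↑(k + 1) : ℂ) * (s - 1)) * qpow q ((l : ℂ) - k)) *
              ((-1) ^ (k + 1) * qbin q l k * NN q (lam - 1) s l k) * h5
      _ = (qpow q ((↑(k + 1) : ℂ) * (s - 1)) * qpow q (-((k : ℂ) + 1))) *
            ((-1) ^ (k + 1) * PP q (lam - 1) l (k + 1) *
              (qbin q l (k + 1) * (c1 * NN q (lam - 1) (s - 1) l (k + 1))))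
          + (qpow q ((↑(k + 1) : ℂ) * (s - 1)) * qpow q ((l : ℂ) - k) * qpow q (s - (l : ℂ) - 1)) *
            ((-1) ^ (k + 1) * qbin q l k * PP q (lam - 1) l k *
              (c1 * NN q (lam - 1) (s - 1) l k))
          + (qpow q ((↑(k + 1) : ℂ) * (s - 1)) * qpow q ((l : ℂ) - k) *
              qpow q (s + lam - 2 * l + k - 1)) *
            ((-1) ^ (k + 1) * qbin q l k * PP q (lam - 1) l k * cb * NN q (lam - 1) s l k) := by
          linear_combination
            (qpow q ((↑(k + 1) : ℂ) * (s - 1)) * qpow q ((l : ℂ) - k)) *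
              ((-1) ^ (k + 1) * qbin q l k * PP q (lam - 1) l k * NN q (lam - 1) s l k) * h6
            + (qpow q ((↑(k + 1) : ℂ) * (s - 1)) * qpow q ((l : ℂ) - k) *
                qpow q (s - (l : ℂ) - 1)) *
              ((-1) ^ (k + 1) * qbin q l k * PP q (lam - 1) l k) * h7
      _ = c1 * ((-1) ^ (k + 1) * qpow q ((↑(k + 1) : ℂ) * (s - 1 - 1)) * qbin q l (k + 1) *
              PP q (lam - 1) l (k + 1) * NN q (lam - 1) (s - 1) l (k + 1))
          - qpow q (2 * s - 2) * c1 * ((-1) ^ k * qpow q ((k : ℂ) * (s - 1 - 1)) * qbin q l k *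
              PP q (lam - 1) l k * NN q (lam - 1) (s - 1) l k)
          - qpow q (2 * s + lam - l - 2) * cb * ((-1) ^ k * qpow q ((k : ℂ) * (s - 1)) *
              qbin q l k * PP q (lam - 1) l k * NN q (lam - 1) s l k) := by
          linear_combination
            ((-1) ^ (k + 1) * PP q (lam - 1) l (k + 1) *
              (qbin q l (k + 1) * (c1 * NN q (lam - 1) (s - 1) l (k + 1)))) * hQ1
            + ((-1) ^ (k + 1) * qbin q l k * PP q (lam - 1) l k *
              (c1 * NN q (lam - 1) (s - 1) l k)) * hQ2
            + ((-1) ^ (k + 1) * qbin q l k * PP q (lam - 1) l k * cb *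
              NN q (lam - 1) s l k) * hQ3
  have htop : tA q (lam - 1) (s - 1) l (l + 1) = 0 := by
    unfold tA
    rw [qbin_zero_top]; ring
  have hzero : tA q lam s (l + 1) 0 = c1 * tA q (lam - 1) (s - 1) l 0 := by
    unfold tA
    rw [NN_top q lam s l 0 (Nat.zero_le l), ← hc1]
    simp [qbin, qtop, qfact, PP, NN, qpow_zero]
  have hmain : TT q lam s (l + 1) =
      (∑ k ∈ range (l + 1), tA q lam s (l + 1) (k + 1)) + tA q lam s (l + 1) 0 :=
    Finset.sum_range_succ' _ (l + 1)
  have hsum : (∑ k ∈ range (l + 1), tA q lam s (l + 1) (k + 1)) =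
      c1 * (∑ k ∈ range (l + 1), tA q (lam - 1) (s - 1) l (k + 1))
      - qpow q (2 * s - 2) * c1 * TT q (lam - 1) (s - 1) l
      - qpow q (2 * s + lam - l - 2) * cb * TT q (lam - 1) s l := by
    unfold TT
    rw [Finset.mul_sum, Finset.mul_sum, Finset.mul_sum, ← Finset.sum_sub_distrib,
      ← Finset.sum_sub_distrib]
    exact Finset.sum_congr rfl fun k hk => hstep k (Nat.lt_succ_iff.mp (Finset.mem_range.mp hk))
  have hshift : (∑ k ∈ range (l + 1), tA q (lam - 1) (s - 1) l (k + 1)) + tA q (lam - 1) (s - 1) l 0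
      = TT q (lam - 1) (s - 1) l := by
    rw [← Finset.sum_range_succ', TT, Finset.sum_range_succ, htop, add_zero]
  rw [hmain, hsum]
  linear_combination c1 * hshift + hzero

noncomputable def GG (s : ℂ) (l : ℕ) : ℂ := ∏ k ∈ range l, qnum q (s - ((k : ℂ) + 1))

noncomputable def CE (lam : ℂ) (l : ℕ) : ℂ :=
  qpow q (-(l : ℂ) * (lam - 2 * l) - l * (l + 1))

omit hq0 hq in
lemma GG_rel (s : ℂ) (l : ℕ) :
    GG q s l * qnum q (s - ((l : ℂ) + 1)) = qnum q (s - 1) * GG q (s - 1) l := by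
  have h1 : GG q s (l + 1) = GG q s l * qnum q (s - ((l : ℂ) + 1)) := Finset.prod_range_succ _ _
  have h2 : GG q s (l + 1) = qnum q (s - 1) * GG q (s - 1) l := by
    rw [GG, Finset.prod_range_succ', mul_comm]
    congr 1
    · congr 1; push_cast; ring
    · rw [GG]; exact Finset.prod_congr rfl fun i _ => by congr 1; push_cast; ring
  rw [← h1, h2]

lemma mini (lam s : ℂ) (l : ℕ) :
    qpow q ((l : ℂ) - lam) * qnum q (s - 1) =
      (1 - qpow q (2 * s - 2)) * qnum q (s + lam - l - 1)
      + qpow q (2 * s + lam - l - 2) * qnum q (s - 1) := by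
  have hX := qpow_ne_zero q s
  have hY := qpow_ne_zero q lam
  have hL := qpow_ne_zero q ((l : ℂ))
  have key : qpow q ((l : ℂ) - lam) * (qpow q (s - 1) - (qpow q (s - 1))⁻¹) =
      (1 - qpow q (2 * s - 2)) * (qpow q (s + lam - l - 1) - (qpow q (s + lam - l - 1))⁻¹)
      + qpow q (2 * s + lam - l - 2) * (qpow q (s - 1) - (qpow q (s - 1))⁻¹) := by
    rw [show (l : ℂ) - lam = (l : ℂ) + (-lam) by ring,
      show s - 1 = s + (-1) by ring,
      show 2 * s - 2 = s + s + (-1) + (-1) by ring,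
      show s + lam - l - 1 = s + lam + (-(l : ℂ)) + (-1) by ring,
      show 2 * s + lam - l - 2 = s + s + lam + (-(l : ℂ)) + (-1) + (-1) by ring]
    simp only [qpow_add, qpow_neg, qpow_one q hq0]
    generalize qpow q s = X at hX ⊢
    generalize qpow q lam = Y at hY ⊢
    generalize qpow q ((l : ℂ)) = L at hL ⊢
    field_simp
    ring
  simp only [qnum_eq]
  linear_combination (q - q⁻¹)⁻¹ * key

lemma TT_closed (l : ℕ) : ∀ lam s : ℂ, TT q lam s l = CE q lam l * GG q s l := by
  induction l with
  | zero =>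
    intro lam s
    simp [TT, tA, CE, GG, qbin, qtop, qfact, PP, NN, qpow_zero]
  | succ l ih =>
    intro lam s
    rw [TT_rec q hq0 hq lam s l, ih (lam - 1) (s - 1), ih (lam - 1) s]
    have hrel := GG_rel q s l
    have hCE : CE q lam (l + 1) = qpow q ((l : ℂ) - lam) * CE q (lam - 1) l := by
      rw [CE, CE, ← qpow_add]; congr 1; push_cast; ring
    have hmini := mini q hq0 hq lam s l
    have hcb : qnum q ((l : ℂ) + 1 - s) = - qnum q (s - ((l : ℂ) + 1)) := by
      rw [show (l : ℂ) + 1 - s = -(s - ((l : ℂ) + 1)) by ring, qnum_neg]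
    have hGb : GG q s (l + 1) = qnum q (s - 1) * GG q (s - 1) l := by
      rw [← GG_rel q s l]; exact Finset.prod_range_succ _ _
    rw [hcb, hCE, hGb]
    linear_combination (-(CE q (lam - 1) l * GG q (s - 1) l)) * hmini
      + (CE q (lam - 1) l * qpow q (2 * s + lam - l - 2)) * hrel

omit hq0 hq in
lemma qfact_Icc (k : ℕ) : (∏ i ∈ Icc 1 k, qnum q (i : ℂ)) = qfact q k := by
  rw [← Finset.Ico_add_one_right_eq_Icc, Finset.prod_Ico_eq_prod_range, qfact]
  exact Finset.prod_congr (by congr 1 <;> omega) fun i _ => by congr 1; push_cast; ring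

omit hq0 hq in
lemma NN_Icc (lam s : ℂ) (l k : ℕ) :
    (∏ i ∈ Icc (k + 1) l, qnum q ((lam - 2 * l) + s + i)) = NN q lam s l k := by
  rw [← Finset.Ico_add_one_right_eq_Icc, Finset.prod_Ico_eq_prod_range, NN, Finset.prod_Ico_eq_prod_range]
  refine Finset.prod_congr (by congr 1 <;> omega) fun i _ => by congr 1; push_cast; ring

omit hq0 hq in
lemma D_split (lam s : ℂ) (l k : ℕ) (hkl : k ≤ l) :
    (∏ i ∈ Icc 1 l, qnum q ((lam - 2 * l) + s + i)) =
      (∏ i ∈ Icc 1 k, qnum q ((lam - 2 * l) + s + i)) * NN q lam s l k := by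
  rw [← NN_Icc q lam s l k, (by exact Finset.Icc_add_one_left_eq_Ioc 0 l : Icc 1 l = Ioc 0 l),
    (by exact Finset.Icc_add_one_left_eq_Ioc 0 k : Icc 1 k = Ioc 0 k), Finset.Icc_add_one_left_eq_Ioc k l]
  exact (Finset.prod_Ioc_consecutive _ (Nat.zero_le k) hkl).symm

omit hq0 hq in
lemma GG_Icc (s : ℂ) (l : ℕ) : (∏ k ∈ Icc 1 l, qnum q (s - (k : ℂ))) = GG q s l := by
  rw [← Finset.Ico_add_one_right_eq_Icc, Finset.prod_Ico_eq_prod_range, GG]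
  refine Finset.prod_congr (by congr 1 <;> omega) fun i _ => by congr 1; push_cast; ring

end TP


/-- on a highest weight `U_q(sl₂)`-module of highest weight `λ`
(modeled with weight basis `v l` of weight `η = λ - 2l`, `F v_l = v_{l+1}`,
`E v_{l+1} = [l+1]_q [λ-l]_q v_l`), the truncated extremal projector
`p_m(s) = Σ_{k=0}^m f^k e^k (-1)^k q^{k(s-1)}/([k]_q! ∏_{i=1}^k [h+s+i]_q)`
acts on `v l` (for `l ≤ m`) by the scalar
`c ∏_{k=1}^l [s-k]_q/[s+η+k]_q` with `c = q^{-lη - l(l+1)} ≠ 0`,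
provided the Cartan denominators `[η+s+i]_q`, `1 ≤ i ≤ l`, are nonzero. -/
theorem truncated_projector_eigenvalue (q lam s : ℂ) (hq0 : q ≠ 0)
    (hq : ∀ n : ℕ, 0 < n → q ^ n ≠ 1)
    (M : Type*) [AddCommGroup M] [Module ℂ M]
    (v : ℕ → M) (hv : LinearIndependent ℂ v)
    (E F : M →ₗ[ℂ] M)
    (hF : ∀ n : ℕ, F (v n) = v (n + 1))
    (hE0 : E (v 0) = 0)
    (hE : ∀ n : ℕ, E (v (n + 1)) = (qnum q (n + 1) * qnum q (lam - n)) • v n)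
    (l m : ℕ) (hlm : l ≤ m)
    (hden : ∀ i : ℕ, 1 ≤ i → i ≤ l → qnum q ((lam - 2 * l) + s + i) ≠ 0) :
    (∑ k ∈ Finset.range (m + 1),
        (((-1 : ℂ) ^ k * qpow q (k * (s - 1))) /
            ((∏ i ∈ Finset.Icc 1 k, qnum q i) *
             (∏ i ∈ Finset.Icc 1 k, qnum q ((lam - 2 * l) + s + i)))) •
          ((F ^ k) ((E ^ k) (v l))))
      = (qpow q (-(l : ℂ) * (lam - 2 * l) - l * (l + 1)) *
          ∏ k ∈ Finset.Icc 1 l, (qnum q (s - k) / qnum q (s + (lam - 2 * l) + k))) • v l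
    ∧ qpow q (-(l : ℂ) * (lam - 2 * l) - l * (l + 1)) ≠ 0 := by
  refine ⟨?_, TP.qpow_ne_zero q _⟩
  -- action of powers of E
  have hEk : ∀ k : ℕ, k ≤ l → (E ^ k) (v l) = (TP.qtop q l k * TP.PP q lam l k) • v (l - k) := by
    intro k
    induction k with
    | zero => intro _; simp [TP.qtop, TP.PP]
    | succ k ih =>
      intro hk1
      have hk : k ≤ l := by omega
      rw [pow_succ', Module.End.mul_apply, ih hk, map_smul]
      have hlk : l - k = (l - (k + 1)) + 1 := by omega
      rw [hlk, hE (l - (k + 1)), smul_smul]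
      congr 1
      have c1 : ((l - (k + 1) : ℕ) : ℂ) + 1 = (l : ℂ) - k := by
        rw [Nat.cast_sub hk1]; push_cast; ring
      have c2 : lam - ((l - (k + 1) : ℕ) : ℂ) = lam - l + k + 1 := by
        rw [Nat.cast_sub hk1]; push_cast; ring
      simp only [TP.qtop, TP.PP]
      rw [Finset.prod_range_succ, Finset.prod_range_succ, c1, c2]
      ring
  have hEk0 : ∀ k : ℕ, l < k → (E ^ k) (v l) = 0 := by
    have h0 : (E ^ (l + 1)) (v l) = 0 := by
      rw [pow_succ', Module.End.mul_apply, hEk l le_rfl, map_smul, Nat.sub_self, hE0, smul_zero]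
    intro k hlk
    rw [show k = (k - (l + 1)) + (l + 1) by omega, pow_add, Module.End.mul_apply, h0, map_zero]
  have hFk : ∀ k n : ℕ, (F ^ k) (v n) = v (n + k) := by
    intro k
    induction k with
    | zero => intro n; simp
    | succ k ih =>
      intro n
      rw [pow_succ', Module.End.mul_apply, ih n, hF (n + k), Nat.add_assoc]
  have hsub : Finset.range (l + 1) ⊆ Finset.range (m + 1) := Finset.range_subset_range.mpr (by omega)
  have hvan : ∀ x ∈ Finset.range (m + 1), x ∉ Finset.range (l + 1) →
      (((-1 : ℂ) ^ x * qpow q (x * (s - 1))) /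
            ((∏ i ∈ Finset.Icc 1 x, qnum q i) *
             (∏ i ∈ Finset.Icc 1 x, qnum q ((lam - 2 * l) + s + i)))) •
          ((F ^ x) ((E ^ x) (v l))) = 0 := by
    intro x _ hx
    have hlx : l < x := by
      by_contra h
      exact hx (Finset.mem_range.mpr (by omega))
    rw [hEk0 x hlx, map_zero, smul_zero]
  rw [← Finset.sum_subset hsub hvan]
  have hterm : ∀ k ∈ Finset.range (l + 1),
      (((-1 : ℂ) ^ k * qpow q (k * (s - 1))) /
            ((∏ i ∈ Finset.Icc 1 k, qnum q i) *
             (∏ i ∈ Finset.Icc 1 k, qnum q ((lam - 2 * l) + s + i)))) •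
          ((F ^ k) ((E ^ k) (v l)))
      = ((((-1 : ℂ) ^ k * qpow q (k * (s - 1))) /
            ((∏ i ∈ Finset.Icc 1 k, qnum q i) *
             (∏ i ∈ Finset.Icc 1 k, qnum q ((lam - 2 * l) + s + i)))) *
          (TP.qtop q l k * TP.PP q lam l k)) • v l := by
    intro k hk
    have hk' : k ≤ l := Nat.lt_succ_iff.mp (Finset.mem_range.mp hk)
    rw [hEk k hk', map_smul, hFk, show l - k + k = l by omega, smul_smul]
  rw [Finset.sum_congr rfl hterm, ← Finset.sum_smul]
  congr 1
  -- scalar identity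
  have hDne : (∏ i ∈ Finset.Icc 1 l, qnum q ((lam - 2 * l) + s + i)) ≠ 0 :=
    Finset.prod_ne_zero_iff.mpr fun i hi =>
      hden i (Finset.mem_Icc.mp hi).1 (Finset.mem_Icc.mp hi).2
  have hTT : (∑ k ∈ Finset.range (l + 1),
        ((((-1 : ℂ) ^ k * qpow q (k * (s - 1))) /
            ((∏ i ∈ Finset.Icc 1 k, qnum q i) *
             (∏ i ∈ Finset.Icc 1 k, qnum q ((lam - 2 * l) + s + i)))) *
          (TP.qtop q l k * TP.PP q lam l k))) *
        (∏ i ∈ Finset.Icc 1 l, qnum q ((lam - 2 * l) + s + i)) = TP.TT q lam s l := by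
    rw [Finset.sum_mul]
    refine Finset.sum_congr rfl fun k hk => ?_
    have hk' : k ≤ l := Nat.lt_succ_iff.mp (Finset.mem_range.mp hk)
    have h1 : TP.qfact q k ≠ 0 := TP.qfact_ne_zero q hq0 hq k
    have h2 : (∏ i ∈ Finset.Icc 1 k, qnum q ((lam - 2 * l) + s + i)) ≠ 0 :=
      Finset.prod_ne_zero_iff.mpr fun i hi =>
        hden i (Finset.mem_Icc.mp hi).1 (le_trans (Finset.mem_Icc.mp hi).2 hk')
    rw [TP.D_split q lam s l k hk', TP.qfact_Icc, TP.tA, TP.qbin]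
    field_simp
  have hsum_eq : (∑ k ∈ Finset.range (l + 1),
        ((((-1 : ℂ) ^ k * qpow q (k * (s - 1))) /
            ((∏ i ∈ Finset.Icc 1 k, qnum q i) *
             (∏ i ∈ Finset.Icc 1 k, qnum q ((lam - 2 * l) + s + i)))) *
          (TP.qtop q l k * TP.PP q lam l k)))
      = TP.TT q lam s l / (∏ i ∈ Finset.Icc 1 l, qnum q ((lam - 2 * l) + s + i)) := by
    rw [eq_div_iff hDne]
    exact hTT
  rw [hsum_eq, TP.TT_closed q hq0 hq l lam s, Finset.prod_div_distrib, TP.GG_Icc q s l,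
    show (∏ k ∈ Finset.Icc 1 l, qnum q (s + (lam - 2 * (l : ℂ)) + k))
        = ∏ i ∈ Finset.Icc 1 l, qnum q (lam - 2 * (l : ℂ) + s + i) from
      Finset.prod_congr rfl fun i _ => by congr 1; ring,
    TP.CE]
  ring
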